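/- Let r_s > 0, a > r_s/4, q be real numbers, set b := r_s²/(16a) and Q := q/(1 + r_s/(4a))², and fix ϑ ∈ [0, π]. For ρ > 0 define r(ρ) := √(a² + ρ² + 2aρ cos ϑ) and c(ρ) := (a + ρ cos ϑ)/r(ρ) (the value of cos θ in particle-adapted coordinates), and let Ψ(ρ) be Linet's potential evaluated at radius r(ρ) and polar angle with cosine c(ρ). Then, as ρ → 0⁺, Ψ(ρ) − (q(1 − r_s/(4a))/(1 + r_s/(4a))³)·(1/ρ) tends to q·r_s/(2a²(1 + r_s/(4a))⁴) + (q·r_s(2 − r_s/(4a))/(4a²(1 + r_s/(4a))⁴))·cos ϑ. That is, near the particle ψ has a Coulomb-type divergence q(1 − r_s/(4a))(1 + r_s/(4a))⁻³/ρ plus the stated finite part. -/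

import Mathlib

open Filter Topology

/-- Copson's auxiliary function μ, expressed through c = cos θ (on which alone it
depends), with particle position `a` and `b = r_s²/(16a)`. -/
noncomputable def muLinetC (r_s a r c : ℝ) : ℝ :=
  Real.sqrt (((r - r_s ^ 2 / (16 * a)) ^ 2 + 2 * (r_s ^ 2 / (16 * a)) * r * (1 - c)) /
    ((r - a) ^ 2 + 2 * a * r * (1 - c)))

/-- Linet's electrostatic potential ψ = (Q/(rμ))·((μ + r_s/(4a))/(1 + r_s/(4r)))²,
expressed through c = cos θ, with Q = q/(1 + r_s/(4a))². -/
noncomputable def psiLinetC (r_s a q r c : ℝ) : ℝ :=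
  (q / (1 + r_s / (4 * a)) ^ 2) / (r * muLinetC r_s a r c) *
    ((muLinetC r_s a r c + r_s / (4 * a)) / (1 + r_s / (4 * r))) ^ 2

set_option maxHeartbeats 1600000 in
/-- Near the particle, in particle-adapted coordinates (ρ,ϑ) with
r(ρ) = √(a² + ρ² + 2aρcos ϑ) and cos θ = (a + ρ cos ϑ)/r(ρ), Linet's potential has a
Coulomb-type divergence q(1 − r_s/(4a))(1 + r_s/(4a))⁻³/ρ plus the finite part
q r_s/(2a²(1 + r_s/(4a))⁴) + (q r_s(2 − r_s/(4a))/(4a²(1 + r_s/(4a))⁴))·cos ϑ. -/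
theorem linet_potential_laurent_expansion (r_s a q ϑ : ℝ)
    (hrs : 0 < r_s) (ha : r_s / 4 < a) (hq : q ≠ 0)
    (hϑ : ϑ ∈ Set.Icc 0 Real.pi) :
    Tendsto (fun ρ : ℝ =>
        psiLinetC r_s a q (Real.sqrt (a ^ 2 + ρ ^ 2 + 2 * a * ρ * Real.cos ϑ))
            ((a + ρ * Real.cos ϑ) / Real.sqrt (a ^ 2 + ρ ^ 2 + 2 * a * ρ * Real.cos ϑ)) -
          (q * (1 - r_s / (4 * a)) / (1 + r_s / (4 * a)) ^ 3) * (1 / ρ))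
      (𝓝[>] 0)
      (𝓝 (q * r_s / (2 * a ^ 2 * (1 + r_s / (4 * a)) ^ 4) +
        (q * r_s * (2 - r_s / (4 * a)) / (4 * a ^ 2 * (1 + r_s / (4 * a)) ^ 4)) *
          Real.cos ϑ)) := by
  set k := Real.cos ϑ with hkdef
  have hk1 : -1 ≤ k := Real.neg_one_le_cos ϑ
  have hk2 : k ≤ 1 := Real.cos_le_one ϑ
  have ha0 : (0:ℝ) < a := lt_trans (by positivity) ha
  have hd0 : (0:ℝ) < a - r_s ^ 2 / (16 * a) := by
    rw [sub_pos, div_lt_iff₀ (by positivity)]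
    nlinarith
  have h4m : (0:ℝ) < 4 * a - r_s := by linarith
  have h4p : (0:ℝ) < 4 * a + r_s := by linarith
  have e1 : a - r_s ^ 2 / (16 * a) = (4 * a - r_s) * (4 * a + r_s) / (16 * a) := by
    field_simp; ring
  have e2 : (1 : ℝ) + r_s / (4 * a) = (4 * a + r_s) / (4 * a) := by
    field_simp
  have e3 : a + r_s / 4 = (4 * a + r_s) / 4 := by ring
  set R : ℝ → ℝ := fun ρ => Real.sqrt (a ^ 2 + ρ ^ 2 + 2 * a * ρ * k) with hRdef
  set S : ℝ → ℝ := fun ρ =>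
    Real.sqrt ((a - r_s ^ 2 / (16 * a)) ^ 2 + ρ ^ 2 + 2 * (a - r_s ^ 2 / (16 * a)) * ρ * k)
    with hSdef
  set F : ℝ → ℝ := fun ρ =>
    R ρ * (S ρ + r_s / (4 * a) * ρ) ^ 2 / (S ρ * (R ρ + r_s / 4) ^ 2) with hFdef
  set Q : ℝ := q / (1 + r_s / (4 * a)) ^ 2 with hQdef
  set D : ℝ :=
    ((k * (a - r_s ^ 2 / (16 * a)) ^ 2 +
        a * (2 * (a - r_s ^ 2 / (16 * a)) * (k + r_s / (4 * a)))) *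
          ((a - r_s ^ 2 / (16 * a)) * (a + r_s / 4) ^ 2) -
      a * (a - r_s ^ 2 / (16 * a)) ^ 2 *
        (k * (a + r_s / 4) ^ 2 + (a - r_s ^ 2 / (16 * a)) * (2 * (a + r_s / 4) * k))) /
      ((a - r_s ^ 2 / (16 * a)) * (a + r_s / 4) ^ 2) ^ 2 with hDdef
  have hR0 : R 0 = a := by
    simp only [hRdef]
    norm_num [Real.sqrt_sq ha0.le]
  have hS0 : S 0 = a - r_s ^ 2 / (16 * a) := by
    simp only [hSdef]
    norm_num [Real.sqrt_sq hd0.le]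
  -- derivatives
  have hpolyR : HasDerivAt (fun ρ : ℝ => a ^ 2 + ρ ^ 2 + 2 * a * ρ * k) (2 * a * k) 0 := by
    have h1 : HasDerivAt (fun ρ : ℝ => ρ ^ 2) (0 : ℝ) 0 := by
      simpa using hasDerivAt_pow 2 (0:ℝ)
    have h2 : HasDerivAt (fun ρ : ℝ => 2 * a * ρ * k) (2 * a * k) 0 := by
      simpa using ((hasDerivAt_id (0:ℝ)).const_mul (2 * a)).mul_const k
    simpa using ((hasDerivAt_const (0:ℝ) (a ^ 2)).fun_add h1).fun_add h2
  have hRd : HasDerivAt R k 0 := by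
    have h := hpolyR.sqrt (by norm_num; positivity)
    convert h using 1
    norm_num [Real.sqrt_sq ha0.le]
    field_simp
  have hpolyS : HasDerivAt (fun ρ : ℝ =>
      (a - r_s ^ 2 / (16 * a)) ^ 2 + ρ ^ 2 + 2 * (a - r_s ^ 2 / (16 * a)) * ρ * k)
      (2 * (a - r_s ^ 2 / (16 * a)) * k) 0 := by
    have h1 : HasDerivAt (fun ρ : ℝ => ρ ^ 2) (0 : ℝ) 0 := by
      simpa using hasDerivAt_pow 2 (0:ℝ)
    have h2 : HasDerivAt (fun ρ : ℝ => 2 * (a - r_s ^ 2 / (16 * a)) * ρ * k)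
        (2 * (a - r_s ^ 2 / (16 * a)) * k) 0 := by
      simpa using ((hasDerivAt_id (0:ℝ)).const_mul (2 * (a - r_s ^ 2 / (16 * a)))).mul_const k
    simpa using ((hasDerivAt_const (0:ℝ) ((a - r_s ^ 2 / (16 * a)) ^ 2)).fun_add h1).fun_add h2
  have hSd : HasDerivAt S k 0 := by
    have h := hpolyS.sqrt (by norm_num; positivity)
    convert h using 1
    norm_num [Real.sqrt_sq hd0.le]
    rw [eq_div_iff (ne_of_gt (by linarith : (0:ℝ) < 2 * (a - r_s ^ 2 / (16 * a))))]
    ring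
  have hnum : HasDerivAt (fun ρ => R ρ * (S ρ + r_s / (4 * a) * ρ) ^ 2)
      (k * (a - r_s ^ 2 / (16 * a)) ^ 2 +
        a * (2 * (a - r_s ^ 2 / (16 * a)) * (k + r_s / (4 * a)))) 0 := by
    have hSb : HasDerivAt (fun ρ => S ρ + r_s / (4 * a) * ρ) (k + r_s / (4 * a)) 0 :=
      hSd.add (by simpa using (hasDerivAt_id (0:ℝ)).const_mul (r_s / (4 * a)))
    have h := hRd.fun_mul (hSb.pow 2)
    refine h.congr_deriv ?_
    simp [hS0, hR0]
  have hden : HasDerivAt (fun ρ => S ρ * (R ρ + r_s / 4) ^ 2)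
      (k * (a + r_s / 4) ^ 2 + (a - r_s ^ 2 / (16 * a)) * (2 * (a + r_s / 4) * k)) 0 := by
    have h := hSd.fun_mul ((hRd.add_const (r_s / 4)).pow 2)
    refine h.congr_deriv ?_
    simp [hS0, hR0]
  have hden0 : S 0 * (R 0 + r_s / 4) ^ 2 ≠ 0 := by
    rw [hR0, hS0]; positivity
  have hFd : HasDerivAt F D 0 := by
    have h := hnum.fun_div hden hden0
    refine h.congr_deriv ?_
    rw [hDdef, hR0, hS0]
    norm_num
  have hslope : Tendsto (fun ρ => (F ρ - F 0) / ρ) (𝓝[>] (0:ℝ)) (𝓝 D) := by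
    have h := hasDerivAt_iff_tendsto_slope.mp hFd
    have h2 := h.mono_left (nhdsWithin_mono _
      (fun x hx => Set.mem_compl_singleton_iff.mpr (ne_of_gt hx)))
    refine h2.congr (fun ρ => ?_)
    simp [slope_fun_def, sub_zero, div_eq_inv_mul]
  have hmem : Set.Ioo (0:ℝ) (min a (a - r_s ^ 2 / (16 * a))) ∈ 𝓝[>] (0:ℝ) :=
    Ioo_mem_nhdsGT_of_mem ⟨le_refl 0, lt_min ha0 hd0⟩
  have heq : (fun ρ => Q * ((F ρ - F 0) / ρ)) =ᶠ[𝓝[>] (0:ℝ)]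
      (fun ρ : ℝ =>
        psiLinetC r_s a q (Real.sqrt (a ^ 2 + ρ ^ 2 + 2 * a * ρ * k))
            ((a + ρ * k) / Real.sqrt (a ^ 2 + ρ ^ 2 + 2 * a * ρ * k)) -
          (q * (1 - r_s / (4 * a)) / (1 + r_s / (4 * a)) ^ 3) * (1 / ρ)) := by
    filter_upwards [hmem] with ρ hρ
    obtain ⟨hρ0, hρm⟩ := hρ
    have hρa : ρ < a := lt_of_lt_of_le hρm (min_le_left _ _)
    have hρd : ρ < a - r_s ^ 2 / (16 * a) := lt_of_lt_of_le hρm (min_le_right _ _)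
    have hgR : 0 < a ^ 2 + ρ ^ 2 + 2 * a * ρ * k := by nlinarith [mul_pos ha0 hρ0]
    have hgS : 0 < (a - r_s ^ 2 / (16 * a)) ^ 2 + ρ ^ 2 +
        2 * (a - r_s ^ 2 / (16 * a)) * ρ * k := by nlinarith [mul_pos hd0 hρ0]
    have hRpos : 0 < R ρ := Real.sqrt_pos.2 hgR
    have hSpos : 0 < S ρ := Real.sqrt_pos.2 hgS
    have hR2 : R ρ ^ 2 = a ^ 2 + ρ ^ 2 + 2 * a * ρ * k := Real.sq_sqrt hgR.le
    have hS2 : S ρ ^ 2 = (a - r_s ^ 2 / (16 * a)) ^ 2 + ρ ^ 2 +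
        2 * (a - r_s ^ 2 / (16 * a)) * ρ * k := Real.sq_sqrt hgS.le
    have hmu : muLinetC r_s a (R ρ) ((a + ρ * k) / R ρ) = S ρ / ρ := by
      have hc : R ρ * (1 - (a + ρ * k) / R ρ) = R ρ - (a + ρ * k) := by
        field_simp [hRpos.ne']
      have hnum' : (R ρ - r_s ^ 2 / (16 * a)) ^ 2 +
          2 * (r_s ^ 2 / (16 * a)) * R ρ * (1 - (a + ρ * k) / R ρ) = S ρ ^ 2 := by
        calc (R ρ - r_s ^ 2 / (16 * a)) ^ 2 +
            2 * (r_s ^ 2 / (16 * a)) * R ρ * (1 - (a + ρ * k) / R ρ)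
            = (R ρ - r_s ^ 2 / (16 * a)) ^ 2 +
              2 * (r_s ^ 2 / (16 * a)) * (R ρ * (1 - (a + ρ * k) / R ρ)) := by ring
          _ = (R ρ - r_s ^ 2 / (16 * a)) ^ 2 +
              2 * (r_s ^ 2 / (16 * a)) * (R ρ - (a + ρ * k)) := by rw [hc]
          _ = S ρ ^ 2 := by rw [hS2]; linear_combination hR2
      have hden' : (R ρ - a) ^ 2 + 2 * a * R ρ * (1 - (a + ρ * k) / R ρ) = ρ ^ 2 := by
        calc (R ρ - a) ^ 2 + 2 * a * R ρ * (1 - (a + ρ * k) / R ρ)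
            = (R ρ - a) ^ 2 + 2 * a * (R ρ * (1 - (a + ρ * k) / R ρ)) := by ring
          _ = (R ρ - a) ^ 2 + 2 * a * (R ρ - (a + ρ * k)) := by rw [hc]
          _ = ρ ^ 2 := by linear_combination hR2
      rw [muLinetC, hnum', hden', ← div_pow, Real.sqrt_sq (by positivity)]
    have hpsi : psiLinetC r_s a q (R ρ) ((a + ρ * k) / R ρ) = Q * F ρ / ρ := by
      rw [psiLinetC, hmu, hFdef, hQdef]
      have h1 : (0:ℝ) < 4 * R ρ + r_s := by linarith
      have h2 : (0:ℝ) < 4 * a + r_s := by linarith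
      have h3 : (0:ℝ) < R ρ + r_s / 4 := by linarith
      field_simp [hρ0.ne', hRpos.ne', hSpos.ne', h1.ne', h2.ne', h3.ne', ha0.ne']
    have hF0 : F 0 = a * (a - r_s ^ 2 / (16 * a)) ^ 2 /
        ((a - r_s ^ 2 / (16 * a)) * (a + r_s / 4) ^ 2) := by
      rw [hFdef]
      simp only [hR0, hS0]
      norm_num
    have hL : q * (1 - r_s / (4 * a)) / (1 + r_s / (4 * a)) ^ 3 = Q * F 0 := by
      rw [hF0, hQdef, e1, e2, e3]
      field_simp [ha0.ne', h4p.ne', h4m.ne']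
      ring
    show Q * ((F ρ - F 0) / ρ) =
      psiLinetC r_s a q (R ρ) ((a + ρ * k) / R ρ) -
        q * (1 - r_s / (4 * a)) / (1 + r_s / (4 * a)) ^ 3 * (1 / ρ)
    rw [hpsi, hL]
    ring
  have hQD : q * r_s / (2 * a ^ 2 * (1 + r_s / (4 * a)) ^ 4) +
      q * r_s * (2 - r_s / (4 * a)) / (4 * a ^ 2 * (1 + r_s / (4 * a)) ^ 4) * k = Q * D := by
    rw [hQdef, hDdef, e1, e2, e3]
    field_simp [ha0.ne', h4p.ne', h4m.ne']
    rw [eq_div_iff (show a * 4 - r_s ≠ 0 by linarith)]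
    ring
  rw [hQD]
  exact (hslope.const_mul Q).congr' heq
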